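/- Let $A$ be a unital associative ring and let $k \ge 1$ be an integer. Then for every $t \in T^{(k)}(A)$ and all $u, v \in A$, the element $3\,[t, u, v] = 3\,[[t,u],v]$ belongs to $T^{(k+2)}(A)$; in other words, $3\,[T^{(k)}, A, A] \subseteq T^{(k+2)}$. -/

import Mathlib

/-- The ring commutator `[a, b] = a * b - b * a`. -/
def brk {A : Type*} [NonUnitalNonAssocRing A] (a b : A) : A := a * b - b * a

/-- The left-normed commutator `[a 0, a 1, ..., a (k-1)]`. -/
def lnc {A : Type*} [NonUnitalNonAssocRing A] : ∀ {k : ℕ}, (Fin k → A) → A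
  | 0, _ => 0
  | 1, a => a 0
  | k + 2, a => brk (lnc (Fin.init a)) (a (Fin.last (k + 1)))

/-- `T A m` is the two-sided ideal of `A` generated by all left-normed commutators
of length `m` (for `m = 1` this is all of `A`). -/
def T (A : Type*) [NonUnitalNonAssocRing A] (m : ℕ) : TwoSidedIdeal A :=
  TwoSidedIdeal.span {x | ∃ a : Fin m → A, x = lnc a}

section helper
variable {A : Type*} [Ring A] {J : TwoSidedIdeal A} {e : A}

lemma lnc_snoc {k : ℕ} (b : Fin (k+1) → A) (w : A) :
    lnc (Fin.snoc b w) = brk (lnc b) w := by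
  show lnc (k := k + 2) (Fin.snoc b w) = _
  rw [lnc]
  simp [Fin.init_snoc, Fin.snoc_last]

lemma three_mem {z : A} (hz : z ∈ J) : 3 * z ∈ J := by
  have : (3 : A) * z = z + z + z := by noncomm_ring
  rw [this]; exact J.add_mem (J.add_mem hz hz) hz

lemma gen_mem {k : ℕ} (b : Fin (k+1) → A) (q r s : A) :
    brk (brk (brk (lnc b) q) r) s ∈ T A (k + 4) := by
  apply TwoSidedIdeal.subset_span
  exact ⟨Fin.snoc (Fin.snoc (Fin.snoc b q) r) s, by simp [lnc_snoc]⟩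

lemma cert_LA (m x y u v : A) (h : ∀ q r s : A, brk (brk (brk e q) r) s ∈ J) :
    3 * (brk (brk x y) u * brk e m) ∈ J := by
  have hid : 3 * (brk (brk x y) u * brk e m) =
      (-5 : A) * (brk (brk (brk e m) (x * y)) u) +
      (1 : A) * (brk (brk (brk e (m * x)) y) u) +
      (4 : A) * (brk (brk (brk e m) x) y) * u +
      ((-1 : A) * m) * (brk (brk (brk e x) y) u) +
      (1 : A) * (brk (brk (brk e m) x) (u * y)) +
      (-3 : A) * (brk (brk (brk e m) (x * u)) y) +
      (-1 : A) * (brk (brk (brk e (m * x)) u) y) +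
      (3 : A) * (brk (brk (brk e m) x) u) * y +
      ((1 : A) * m) * (brk (brk (brk e x) u) y) +
      (1 : A) * (brk (brk (brk e (m * y)) x) u) +
      (-1 : A) * (brk (brk (brk e m) y) x) * u +
      ((1 : A) * m) * (brk (brk (brk e y) x) u) +
      (2 : A) * (brk (brk (brk e m) y) (u * x)) +
      (-1 : A) * (brk (brk (brk e m) (y * u)) x) +
      (-1 : A) * (brk (brk (brk e (m * y)) u) x) +
      ((-2 : A) * m) * (brk (brk (brk e y) u) x) +
      (4 : A) * (brk (brk (brk e m) u) (x * y)) +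
      (-2 : A) * (brk (brk (brk e (m * u)) x) y) +
      (-2 : A) * (brk (brk (brk e m) u) x) * y +
      ((2 : A) * m) * (brk (brk (brk e u) x) y) +
      (1 : A) * (brk (brk (brk e x) m) (y * u)) +
      (-2 : A) * (brk (brk (brk e x) (m * y)) u) +
      (2 : A) * (brk (brk (brk e (x * m)) y) u) +
      (-1 : A) * (brk (brk (brk e x) m) y) * u +
      (2 : A) * (brk (brk (brk e x) m) (u * y)) +
      (-2 : A) * (brk (brk (brk e x) (m * u)) y) +
      (1 : A) * (brk (brk (brk e x) y) (m * u)) +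
      (-3 : A) * (brk (brk (brk e x) (y * m)) u) +
      (2 : A) * (brk (brk (brk e (x * y)) m) u) +
      ((-1 : A) * x) * (brk (brk (brk e y) m) u) +
      (2 : A) * (brk (brk (brk e x) y) (u * m)) +
      (-1 : A) * (brk (brk (brk e x) (y * u)) m) +
      (-1 : A) * (brk (brk (brk e (x * y)) u) m) +
      ((-1 : A) * x) * (brk (brk (brk e y) u) m) +
      (2 : A) * (brk (brk (brk e x) u) (y * m)) +
      (-2 : A) * (brk (brk (brk e (x * u)) y) m) +
      ((2 : A) * x) * (brk (brk (brk e u) y) m) +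
      (2 : A) * (brk (brk (brk e y) m) (x * u)) +
      (-2 : A) * (brk (brk (brk e y) (m * x)) u) +
      (-1 : A) * (brk (brk (brk e y) m) (u * x)) +
      (1 : A) * (brk (brk (brk e y) (m * u)) x) +
      (2 : A) * (brk (brk (brk e y) u) (m * x)) +
      (-2 : A) * (brk (brk (brk e (y * u)) m) x) +
      ((2 : A) * y) * (brk (brk (brk e u) m) x) := by
    simp only [brk]; noncomm_ring
  rw [hid]
  exact (J.add_mem (J.add_mem (J.add_mem (J.add_mem (J.add_mem (J.add_mem (J.add_mem (J.add_mem (J.add_mem (J.add_mem (J.add_mem (J.add_mem (J.add_mem (J.add_mem (J.add_mem (J.add_mem (J.add_mem (J.add_mem (J.add_mem (J.add_mem (J.add_mem (J.add_mem (J.add_mem (J.add_mem (J.add_mem (J.add_mem (J.add_mem (J.add_mem (J.add_mem (J.add_mem (J.add_mem (J.add_mem (J.add_mem (J.add_mem (J.add_mem (J.add_mem (J.add_mem (J.add_mem (J.add_mem (J.add_mem (J.add_mem (J.add_mem (J.add_mem (J.mul_mem_left _ _ (h m (x * y) u)) (J.mul_mem_left _ _ (h (m * x) y u))) (J.mul_mem_right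 _ _ (J.mul_mem_left _ _ (h m x y)))) (J.mul_mem_left _ _ (h x y u))) (J.mul_mem_left _ _ (h m x (u * y)))) (J.mul_mem_left _ _ (h m (x * u) y))) (J.mul_mem_left _ _ (h (m * x) u y))) (J.mul_mem_right _ _ (J.mul_mem_left _ _ (h m x u)))) (J.mul_mem_left _ _ (h x u y))) (J.mul_mem_left _ _ (h (m * y) x u))) (J.mul_mem_right _ _ (J.mul_mem_left _ _ (h m y x)))) (J.mul_mem_left _ _ (h y x u))) (J.mul_mem_left _ _ (h m y (u * x)))) (J.mul_mem_left _ _ (h m (y * u) x))) (J.mul_mem_left _ _ (h (m * y) u x))) (J.mul_mem_left _ _ (h y u x))) (J.mul_mem_left _ _ (h m u (x * y)))) (J.mul_mem_left _ _ (h (m * u) x y))) (J.mul_mem_right _ _ (J.mul_mem_left _ _ (h m u x)))) (J.mul_mem_left _ _ (h u x y))) (J.mul_mem_left _ _ (h x m (y * u)))) (J.mul_mem_left _ _ (h x (m * y) u))) (J.mul_mem_left _ _ (h (x * m) y u))) (J.mul_mem_right _ _ (J.mul_mem_left _ _ (h x m y)))) (J.mul_mem_left _ _ (h x m (u * y))))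 (J.mul_mem_left _ _ (h x (m * u) y))) (J.mul_mem_left _ _ (h x y (m * u)))) (J.mul_mem_left _ _ (h x (y * m) u))) (J.mul_mem_left _ _ (h (x * y) m u))) (J.mul_mem_left _ _ (h y m u))) (J.mul_mem_left _ _ (h x y (u * m)))) (J.mul_mem_left _ _ (h x (y * u) m))) (J.mul_mem_left _ _ (h (x * y) u m))) (J.mul_mem_left _ _ (h y u m))) (J.mul_mem_left _ _ (h x u (y * m)))) (J.mul_mem_left _ _ (h (x * u) y m))) (J.mul_mem_left _ _ (h u y m))) (J.mul_mem_left _ _ (h y m (x * u)))) (J.mul_mem_left _ _ (h y (m * x) u))) (J.mul_mem_left _ _ (h y m (u * x)))) (J.mul_mem_left _ _ (h y (m * u) x))) (J.mul_mem_left _ _ (h y u (m * x)))) (J.mul_mem_left _ _ (h (y * u) m x))) (J.mul_mem_left _ _ (h u m x)))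

lemma cert_LB (m x y u v : A) (h : ∀ q r s : A, brk (brk (brk e q) r) s ∈ J) :
    brk x u * brk (brk e m) v + brk x v * brk (brk e m) u ∈ J := by
  have hid : brk x u * brk (brk e m) v + brk x v * brk (brk e m) u =
      (1 : A) * (brk (brk (brk e m) (x * u)) v) +
      (-1 : A) * (brk (brk (brk e m) x) u) * v +
      (1 : A) * (brk (brk (brk e m) (x * v)) u) +
      (-1 : A) * (brk (brk (brk e m) x) v) * u +
      (-1 : A) * (brk (brk (brk e m) u) (x * v)) +
      (1 : A) * (brk (brk (brk e m) u) x) * v +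
      (-1 : A) * (brk (brk (brk e m) v) (x * u)) +
      (1 : A) * (brk (brk (brk e m) v) x) * u := by
    simp only [brk]; noncomm_ring
  rw [hid]
  exact (J.add_mem (J.add_mem (J.add_mem (J.add_mem (J.add_mem (J.add_mem (J.add_mem (J.mul_mem_left _ _ (h m (x * u) v)) (J.mul_mem_right _ _ (J.mul_mem_left _ _ (h m x u)))) (J.mul_mem_left _ _ (h m (x * v) u))) (J.mul_mem_right _ _ (J.mul_mem_left _ _ (h m x v)))) (J.mul_mem_left _ _ (h m u (x * v)))) (J.mul_mem_right _ _ (J.mul_mem_left _ _ (h m u x)))) (J.mul_mem_left _ _ (h m v (x * u)))) (J.mul_mem_right _ _ (J.mul_mem_left _ _ (h m v x))))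

lemma cert_LC (m x y u v : A) (h : ∀ q r s : A, brk (brk (brk e q) r) s ∈ J) :
    brk (brk x y) u * brk (brk e m) v ∈ J := by
  have hid : brk (brk x y) u * brk (brk e m) v =
      (-1 : A) * (brk (brk (brk e m) (x * y)) u) * v +
      (1 : A) * (brk (brk (brk e m) x) y) * (u * v) +
      (1 : A) * (brk (brk (brk e m) ((x * y) * v)) u) +
      (-1 : A) * (brk (brk (brk e m) x) y) * (v * u) +
      (-1 : A) * (brk (brk (brk e m) (x * u)) (v * y)) +
      (1 : A) * (brk (brk (brk e m) ((x * u) * v)) y) +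
      (1 : A) * (brk (brk (brk e m) x) (v * y)) * u +
      (-1 : A) * (brk (brk (brk e m) (x * v)) y) * u +
      (1 : A) * (brk (brk (brk e m) ((y * x) * u)) v) +
      (1 : A) * (brk (brk (brk e m) (y * x)) u) * v +
      (-2 : A) * (brk (brk (brk e m) y) x) * (u * v) +
      (-1 : A) * (brk (brk (brk e m) ((y * x) * v)) u) +
      (1 : A) * (brk (brk (brk e m) y) (x * v)) * u +
      (-1 : A) * (brk (brk (brk e m) (y * x)) v) * u +
      (1 : A) * (brk (brk (brk e m) y) x) * (v * u) +
      (-1 : A) * (brk (brk (brk e m) (y * u)) (x * v)) +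
      (1 : A) * (brk (brk (brk e m) (y * u)) x) * v +
      (1 : A) * (brk (brk (brk e m) u) ((x * v) * y)) +
      (-1 : A) * (brk (brk (brk e m) u) x) * (v * y) +
      (-1 : A) * (brk (brk (brk e m) (u * v)) (x * y)) +
      (1 : A) * (brk (brk (brk e m) (u * v)) x) * y +
      (1 : A) * (brk (brk (brk e m) v) (x * y)) * u +
      (-1 : A) * (brk (brk (brk e m) v) x) * (y * u) := by
    simp only [brk]; noncomm_ring
  rw [hid]
  exact (J.add_mem (J.add_mem (J.add_mem (J.add_mem (J.add_mem (J.add_mem (J.add_mem (J.add_mem (J.add_mem (J.add_mem (J.add_mem (J.add_mem (J.add_mem (J.add_mem (J.add_mem (J.add_mem (J.add_mem (J.add_mem (J.add_mem (J.add_mem (J.add_mem (J.add_mem (J.mul_mem_right _ _ (J.mul_mem_left _ _ (h m (x * y) u))) (J.mul_mem_right _ _ (J.mul_mem_left _ _ (h m x y)))) (J.mul_mem_left _ _ (h m ((x * y) * v) u))) (J.mul_mem_right _ _ (J.mul_mem_left _ _ (h m x y)))) (J.mul_mem_left _ _ (h m (x * u) (v * y)))) (J.mul_mem_left _ _ (h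 m ((x * u) * v) y))) (J.mul_mem_right _ _ (J.mul_mem_left _ _ (h m x (v * y))))) (J.mul_mem_right _ _ (J.mul_mem_left _ _ (h m (x * v) y)))) (J.mul_mem_left _ _ (h m ((y * x) * u) v))) (J.mul_mem_right _ _ (J.mul_mem_left _ _ (h m (y * x) u)))) (J.mul_mem_right _ _ (J.mul_mem_left _ _ (h m y x)))) (J.mul_mem_left _ _ (h m ((y * x) * v) u))) (J.mul_mem_right _ _ (J.mul_mem_left _ _ (h m y (x * v))))) (J.mul_mem_right _ _ (J.mul_mem_left _ _ (h m (y * x) v)))) (J.mul_mem_right _ _ (J.mul_mem_left _ _ (h m y x)))) (J.mul_mem_left _ _ (h m (y * u) (x * v)))) (J.mul_mem_right _ _ (J.mul_mem_left _ _ (h m (y * u) x)))) (J.mul_mem_left _ _ (h m u ((x * v) * y)))) (J.mul_mem_right _ _ (J.mul_mem_left _ _ (h m u x)))) (J.mul_mem_left _ _ (h m (u * v) (x * y)))) (J.mul_mem_right _ _ (J.mul_mem_left _ _ (h m (u * v) x)))) (J.mul_mem_right _ _ (J.mul_mem_left _ _ (h m v (x * y))))) (J.mul_mem_right _ _ (J.mul_mem_left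 _ _ (h m v x))))

lemma cert_LR (m x y u v : A) (h : ∀ q r s : A, brk (brk (brk e q) r) s ∈ J) :
    brk (brk (x * brk e m * y) u) v - brk (brk (x * y) u) v * brk e m - brk (x * y) u * brk (brk e m) v - brk (x * y) v * brk (brk e m) u - brk (brk x u) v * brk (brk e m) y ∈ J := by
  have hid : brk (brk (x * brk e m * y) u) v - brk (brk (x * y) u) v * brk e m - brk (x * y) u * brk (brk e m) v - brk (x * y) v * brk (brk e m) u - brk (brk x u) v * brk (brk e m) y =
      (1 : A) * (brk (brk (brk e m) (x * y)) u) * v +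
      (-1 : A) * (brk (brk (brk e m) x) y) * (u * v) +
      (1 : A) * (brk (brk (brk e m) (x * y)) v) * u +
      (-1 : A) * (brk (brk (brk e m) x) y) * (v * u) +
      (-1 : A) * (brk (brk (brk e m) ((x * u) * y)) v) +
      (1 : A) * (brk (brk (brk e m) x) (u * y)) * v +
      (1 : A) * (brk (brk (brk e m) (x * u)) y) * v +
      (-1 : A) * (brk (brk (brk e m) x) u) * (y * v) +
      (-1 : A) * (brk (brk (brk e m) (x * u)) (v * y)) +
      (1 : A) * (brk (brk (brk e m) (x * u)) v) * y +
      (-1 : A) * (brk (brk (brk e m) ((x * v) * y)) u) +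
      (1 : A) * (brk (brk (brk e m) x) (v * y)) * u +
      (1 : A) * (brk (brk (brk e m) (x * v)) y) * u +
      (-1 : A) * (brk (brk (brk e m) x) v) * (y * u) +
      (-1 : A) * (brk (brk (brk e m) (x * v)) (u * y)) +
      (1 : A) * (brk (brk (brk e m) (x * v)) u) * y +
      (1 : A) * (brk (brk (brk e m) y) ((x * u) * v)) +
      (1 : A) * (brk (brk (brk e m) ((y * x) * u)) v) +
      (-1 : A) * (brk (brk (brk e m) y) (x * u)) * v +
      (-1 : A) * (brk (brk (brk e m) (y * x)) u) * v +
      (1 : A) * (brk (brk (brk e m) ((y * x) * v)) u) +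
      (-1 : A) * (brk (brk (brk e m) y) (x * v)) * u +
      (-1 : A) * (brk (brk (brk e m) (y * x)) v) * u +
      (1 : A) * (brk (brk (brk e m) y) x) * (v * u) +
      (1 : A) * (brk (brk (brk e m) u) ((x * y) * v)) +
      (-1 : A) * (brk (brk (brk e m) u) (x * y)) * v := by
    simp only [brk]; noncomm_ring
  rw [hid]
  exact (J.add_mem (J.add_mem (J.add_mem (J.add_mem (J.add_mem (J.add_mem (J.add_mem (J.add_mem (J.add_mem (J.add_mem (J.add_mem (J.add_mem (J.add_mem (J.add_mem (J.add_mem (J.add_mem (J.add_mem (J.add_mem (J.add_mem (J.add_mem (J.add_mem (J.add_mem (J.add_mem (J.add_mem (J.add_mem (J.mul_mem_right _ _ (J.mul_mem_left _ _ (h m (x * y) u))) (J.mul_mem_right _ _ (J.mul_mem_left _ _ (h m x y)))) (J.mul_mem_right _ _ (J.mul_mem_left _ _ (h m (x * y) v)))) (J.mul_mem_right _ _ (J.mul_mem_left _ _ (h m x y)))) (J.mul_mem_left _ _ (h m ((x * u) * y) v))) (J.mul_mem_right _ _ (J.mul_mem_left _ _ (h m x (u * y))))) (J.mul_mem_right _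 _ (J.mul_mem_left _ _ (h m (x * u) y)))) (J.mul_mem_right _ _ (J.mul_mem_left _ _ (h m x u)))) (J.mul_mem_left _ _ (h m (x * u) (v * y)))) (J.mul_mem_right _ _ (J.mul_mem_left _ _ (h m (x * u) v)))) (J.mul_mem_left _ _ (h m ((x * v) * y) u))) (J.mul_mem_right _ _ (J.mul_mem_left _ _ (h m x (v * y))))) (J.mul_mem_right _ _ (J.mul_mem_left _ _ (h m (x * v) y)))) (J.mul_mem_right _ _ (J.mul_mem_left _ _ (h m x v)))) (J.mul_mem_left _ _ (h m (x * v) (u * y)))) (J.mul_mem_right _ _ (J.mul_mem_left _ _ (h m (x * v) u)))) (J.mul_mem_left _ _ (h m y ((x * u) * v)))) (J.mul_mem_left _ _ (h m ((y * x) * u) v))) (J.mul_mem_right _ _ (J.mul_mem_left _ _ (h m y (x * u))))) (J.mul_mem_right _ _ (J.mul_mem_left _ _ (h m (y * x) u)))) (J.mul_mem_left _ _ (h m ((y * x) * v) u))) (J.mul_mem_right _ _ (J.mul_mem_left _ _ (h m y (x * v))))) (J.mul_mem_right _ _ (J.mul_mem_left _ _ (h m (y * x) v)))) (J.mul_mem_right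 _ _ (J.mul_mem_left _ _ (h m y x)))) (J.mul_mem_left _ _ (h m u ((x * y) * v)))) (J.mul_mem_right _ _ (J.mul_mem_left _ _ (h m u (x * y)))))

lemma core (e m : A)
    (h : ∀ q r s : A, brk (brk (brk e q) r) s ∈ J) (x y u v : A) :
    3 * brk (brk (x * brk e m * y) u) v ∈ J := by
  have key : 3 * brk (brk (x * brk e m * y) u) v =
      3 * (brk (brk (x * brk e m * y) u) v - brk (brk (x * y) u) v * brk e m -
        brk (x * y) u * brk (brk e m) v - brk (x * y) v * brk (brk e m) u -
        brk (brk x u) v * brk (brk e m) y)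
      + 3 * (brk (brk (x * y) u) v * brk e m)
      + 3 * (brk (x * y) u * brk (brk e m) v + brk (x * y) v * brk (brk e m) u)
      + 3 * (brk (brk x u) v * brk (brk e m) y) := by
    noncomm_ring
  rw [key]
  refine J.add_mem (J.add_mem (J.add_mem ?_ ?_) ?_) ?_
  · exact three_mem (cert_LR m x y u v h)
  · exact cert_LA m (x * y) u v v h
  · exact three_mem (cert_LB m (x * y) y u v h)
  · exact three_mem (cert_LC m x u v y h)

lemma key_lemma (k : ℕ) (a : Fin (k+1) → A) (x y u v : A) :
    3 * brk (brk (x * lnc a * y) u) v ∈ T A (k + 3) := by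
  cases k with
  | zero =>
      apply three_mem
      apply TwoSidedIdeal.subset_span
      refine ⟨Fin.snoc (Fin.snoc (fun _ : Fin 1 => x * lnc a * y) u) v, ?_⟩
      rw [lnc_snoc, lnc_snoc]
      rfl
  | succ j =>
      have he : lnc a = brk (lnc (Fin.init a)) (a (Fin.last (j+1))) := by
        show lnc (k := j + 2) a = _; rw [lnc]
      rw [he]
      exact core _ _ (fun q r s => gen_mem (Fin.init a) q r s) x y u v

end helper

theorem three_mul_comm_T_A_A_mem {A : Type*} [Ring A] (k : ℕ) (hk : 1 ≤ k)
    (t : A) (ht : t ∈ T A k) (u v : A) :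
    3 * brk (brk t u) v ∈ T A (k + 2) := by
  obtain ⟨j, rfl⟩ : ∃ j, k = j + 1 := ⟨k - 1, (Nat.succ_pred_eq_of_pos hk).symm⟩
  rw [T, TwoSidedIdeal.mem_span_iff_mem_addSubgroup_closure] at ht
  induction ht using AddSubgroup.closure_induction with
  | mem z hz =>
      obtain ⟨w, ⟨p, -, g, ⟨a, rfl⟩, rfl⟩, q, -, rfl⟩ := hz
      exact key_lemma j a p q u v
  | zero =>
      have h0 : 3 * brk (brk (0 : A) u) v = 0 := by simp [brk]
      rw [h0]; exact (T A (j + 1 + 2)).zero_mem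
  | add z w _ _ hz hw =>
      have : 3 * brk (brk (z + w) u) v = 3 * brk (brk z u) v + 3 * brk (brk w u) v := by
        simp [brk]; noncomm_ring
      rw [this]; exact (T A (j + 1 + 2)).add_mem hz hw
  | neg z _ hz =>
      have : 3 * brk (brk (-z) u) v = -(3 * brk (brk z u) v) := by
        simp [brk]; noncomm_ring
      rw [this]; exact (T A (j + 1 + 2)).neg_mem hz
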